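/- Theorem 4 (optimality of uniform noise, lower-bound part): Let σ > 0 and let f : ℝ → ℝ be a probability density function that is symmetric around 0, non-increasing on [0, ∞), and satisfies ∫_ℝ x² f(x) dx ≤ σ². Then f(0) ≥ 1/(2√3 σ). -/

import Mathlib

open MeasureTheory

/-- Theorem 4 (optimality of uniform noise, lower-bound part): if `f` is a density on `ℝ`,
symmetric around `0`, non-increasing on `[0,∞)`, with second moment at most `σ²`, then
`f(0) ≥ 1/(2√3 σ)`. -/
theorem uniform_noise_optimal_lower_bound
    (σ : ℝ) (hσ : 0 < σ)
    (f : ℝ → ℝ)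
    (h_nonneg : ∀ x, 0 ≤ f x) (h_meas : Measurable f)
    (h_int : ∫ x, f x = 1)
    (h_symm : ∀ x, f (-x) = f x)
    (h_mono : ∀ x y, 0 ≤ x → x ≤ y → f y ≤ f x)
    (h_var : ∫⁻ x, ENNReal.ofReal (x ^ 2 * f x) ≤ ENNReal.ofReal (σ ^ 2)) :
    1 / (2 * Real.sqrt 3 * σ) ≤ f 0 := by
  set c := f 0 with hc
  -- f x ≤ c for all x
  have hle : ∀ x, f x ≤ c := by
    intro x
    rcases le_or_gt 0 x with h | h
    · exact h_mono 0 x le_rfl h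
    · have := h_mono 0 (-x) le_rfl (by linarith)
      rw [h_symm x] at this; exact this
  -- c > 0
  have hcpos : 0 < c := by
    by_contra h
    push_neg at h
    have hz : ∀ x, f x = 0 := fun x => le_antisymm ((hle x).trans h) (h_nonneg x)
    simp only [hz] at h_int
    simp at h_int
  set a : ℝ := 1 / (2 * c) with ha
  have hapos : 0 < a := by positivity
  -- f integrable
  have hfint : Integrable f := by
    by_contra h
    rw [integral_undef h] at h_int
    exact one_ne_zero h_int.symm
  -- x^2 * f x integrable
  have hmeas2 : Measurable fun x : ℝ => x ^ 2 * f x :=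
    (measurable_id.pow_const 2).mul h_meas
  have hfi2 : Integrable (fun x : ℝ => x ^ 2 * f x) := by
    refine ⟨hmeas2.aestronglyMeasurable, ?_⟩
    rw [hasFiniteIntegral_iff_ofReal (Filter.Eventually.of_forall fun x => mul_nonneg (sq_nonneg x) (h_nonneg x))]
    exact lt_of_le_of_lt h_var ENNReal.ofReal_lt_top
  have hIeq : ENNReal.ofReal (∫ x, x ^ 2 * f x) = ∫⁻ x, ENNReal.ofReal (x ^ 2 * f x) :=
    ofReal_integral_eq_lintegral_ofReal hfi2
      (Filter.Eventually.of_forall fun x => mul_nonneg (sq_nonneg x) (h_nonneg x))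
  -- the comparison density g
  set g : ℝ → ℝ := (Set.Icc (-a) a).indicator (fun _ => c) with hg
  have hg_nonneg : ∀ x, 0 ≤ g x := by
    intro x; rw [hg]
    exact Set.indicator_nonneg (fun _ _ => hcpos.le) x
  have hgint : Integrable g := by
    rw [hg]
    exact (integrableOn_const measure_Icc_lt_top.ne).integrable_indicator
      measurableSet_Icc
  have hgval : ∫ x, g x = 1 := by
    rw [hg, integral_indicator_const c measurableSet_Icc, Real.volume_real_Icc_of_le (by linarith),
      smul_eq_mul, ha]
    field_simp
    norm_num
  -- x^2 * g x
  have hx2g : (fun x : ℝ => x ^ 2 * g x)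
      = (Set.Icc (-a) a).indicator (fun x => x ^ 2 * c) := by
    funext x
    rw [hg]
    by_cases hx : x ∈ Set.Icc (-a) a <;> simp [hx]
  have hgi2 : Integrable (fun x : ℝ => x ^ 2 * g x) := by
    rw [hx2g]
    exact (((continuous_pow 2).mul continuous_const).integrableOn_Icc).integrable_indicator
      measurableSet_Icc
  have hgi2val : ∫ x, x ^ 2 * g x = 2 * a ^ 3 * c / 3 := by
    rw [hx2g, integral_indicator measurableSet_Icc, integral_Icc_eq_integral_Ioc,
      ← intervalIntegral.integral_of_le (by linarith : -a ≤ a)]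
    rw [intervalIntegral.integral_mul_const, integral_pow]
    ring
  -- pointwise inequality
  have hpt : ∀ x, 0 ≤ (x ^ 2 - a ^ 2) * (f x - g x) := by
    intro x
    by_cases hx : x ∈ Set.Icc (-a) a
    · have h1 : g x = c := by rw [hg]; simp [hx]
      have h2 : x ^ 2 ≤ a ^ 2 := by
        obtain ⟨hl, hr⟩ := hx
        nlinarith
      have := hle x
      nlinarith
    · have h1 : g x = 0 := by rw [hg]; simp [Set.indicator_of_notMem hx]
      have h2 : a ^ 2 ≤ x ^ 2 := by
        simp only [Set.mem_Icc, not_and_or, not_le] at hx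
        rcases hx with h | h <;> nlinarith
      have := h_nonneg x
      nlinarith
  have key : 0 ≤ ∫ x, (x ^ 2 - a ^ 2) * (f x - g x) := integral_nonneg hpt
  have hexp : ∫ x, (x ^ 2 - a ^ 2) * (f x - g x)
      = (∫ x, x ^ 2 * f x) - (∫ x, x ^ 2 * g x)
        - a ^ 2 * ((∫ x, f x) - ∫ x, g x) := by
    have e : (fun x => (x ^ 2 - a ^ 2) * (f x - g x))
        = fun x => (x ^ 2 * f x - x ^ 2 * g x) - a ^ 2 * (f x - g x) := by
      funext x; ring
    have i1 : Integrable (fun x : ℝ => x ^ 2 * f x - x ^ 2 * g x) := hfi2.sub hgi2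
    have i2 : Integrable (fun x : ℝ => a ^ 2 * (f x - g x)) :=
      (hfint.sub hgint).const_mul _
    rw [e, integral_sub i1 i2, integral_sub hfi2 hgi2, integral_const_mul,
      integral_sub hfint hgint]
  rw [hexp, h_int, hgval, hgi2val] at key
  -- so ∫ x^2 f ≥ 2a^3 c /3 = 1/(12 c^2)
  have hI : 2 * a ^ 3 * c / 3 ≤ ∫ x, x ^ 2 * f x := by linarith
  have hIval : (1 : ℝ) / (12 * c ^ 2) ≤ ∫ x, x ^ 2 * f x := by
    have : 2 * a ^ 3 * c / 3 = 1 / (12 * c ^ 2) := by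
      rw [ha]; field_simp; ring
    linarith [this ▸ hI]
  -- ∫ x^2 f ≤ σ^2
  have hIσ : ∫ x, x ^ 2 * f x ≤ σ ^ 2 := by
    rw [← ENNReal.ofReal_le_ofReal_iff (by positivity), hIeq]
    exact h_var
  have hfin : (1 : ℝ) / (12 * c ^ 2) ≤ σ ^ 2 := le_trans hIval hIσ
  -- conclude
  have hs3 : (0 : ℝ) < Real.sqrt 3 := Real.sqrt_pos.mpr (by norm_num)
  have hs3sq : Real.sqrt 3 ^ 2 = 3 := Real.sq_sqrt (by norm_num)
  have h12 : 1 ≤ 12 * c ^ 2 * σ ^ 2 := by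
    rw [div_le_iff₀ (by positivity)] at hfin
    linarith
  rw [div_le_iff₀ (by positivity)]
  nlinarith [h12, hs3sq, hs3, mul_pos hcpos hσ]
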